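/- Assume the graph whose vertices are the cells 𝒯 and which has an edge between K and L for every σ = K|L ∈ Σ is connected, and assume there exists (ρ̂, F̂) ∈ 𝒞_{N,𝒯} with B_{N,𝒯}(ρ̂, F̂) < +∞. Then there exists a constant C > 0 independent of μ such that for every μ ∈ (0,1], any minimizer (ρ^μ, F^μ) of B_{N,𝒯} + μ J_{N,𝒯} over 𝒞_{N,𝒯} satisfies (ρ^μ)^k_{K'} ≥ C μ for every K' ∈ 𝒯' and every k ∈ {1,…,N}. -/

import Mathlib

open scoped BigOperators ENNReal RealInnerProductSpace
open Finset

namespace OTFV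

/-- The Benamou–Brenier action density for a scalar flux value. -/
noncomputable def Bact (p q : ℝ) : ℝ≥0∞ :=
  if 0 < p then ENNReal.ofReal (q ^ 2 / (2 * p))
  else if p = 0 ∧ q = 0 then 0 else ⊤

/-- Combinatorial/metric data of an admissible TPFA mesh: cells `T`, internal
edges `E`; an edge `σ` joins the two distinct cells `e1 σ` and `e2 σ`. -/
structure Mesh (T E : Type*) where
  e1 : E → T
  e2 : E → T
  ne : ∀ σ, e1 σ ≠ e2 σ
  m : T → ℝ
  m_pos : ∀ K, 0 < m K
  mS : E → ℝ
  mS_pos : ∀ σ, 0 < mS σ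
  dS : E → ℝ
  dS_pos : ∀ σ, 0 < dS σ
  d1 : E → ℝ   -- d_{K,σ} for K = e1 σ
  d2 : E → ℝ   -- d_{L,σ} for L = e2 σ
  d1_pos : ∀ σ, 0 < d1 σ
  d2_pos : ∀ σ, 0 < d2 σ
  d_sum : ∀ σ, d1 σ + d2 σ = dS σ

variable {T T' E : Type*}

/-- A conservative flux is encoded by its value `F σ = F_{K,σ}` on the side `K = e1 σ`
(so that `F_{L,σ} = -F σ` for `L = e2 σ`).  Discrete divergence. -/
noncomputable def divT [Fintype E] [DecidableEq T] (M : Mesh T E) (F : E → ℝ) (K : T) : ℝ :=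
  (∑ σ, ((if M.e1 σ = K then F σ else 0) + (if M.e2 σ = K then -F σ else 0)) * M.mS σ) / M.m K

/-- Discrete gradient, oriented from `e1 σ` to `e2 σ` (the `(K,σ)` component, `K = e1 σ`). -/
noncomputable def gradS (M : Mesh T E) (a : T → ℝ) (σ : E) : ℝ :=
  (a (M.e2 σ) - a (M.e1 σ)) / M.dS σ

/-- Linear (weighted arithmetic mean) reconstruction on edges. -/
noncomputable def linRec (M : Mesh T E) (a : T → ℝ) (σ : E) : ℝ :=
  (M.d1 σ / M.dS σ) * a (M.e1 σ) + (M.d2 σ / M.dS σ) * a (M.e2 σ)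

/-- Injection from coarse densities to fine densities, `p` maps a fine cell to its coarse cell. -/
def inj (p : T → T') (ρ : T' → ℝ) : T → ℝ := fun K => ρ (p K)

/-- Mass of a coarse cell. -/
noncomputable def coarseM [Fintype T] [DecidableEq T'] (M : Mesh T E) (p : T → T') (K' : T') : ℝ :=
  ∑ K ∈ Finset.univ.filter (fun K => p K = K'), M.m K

/-- Adjoint of the injection. -/
noncomputable def injAdj [Fintype T] [DecidableEq T'] (M : Mesh T E) (p : T → T')
    (a : T → ℝ) (K' : T') : ℝ :=
  (∑ K ∈ Finset.univ.filter (fun K => p K = K'), a K * M.m K) / coarseM M p K'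

/-- Adjoint of the linear reconstruction, `(L_Σ^* u)_K = Σ_{σ∈Σ_K} u_σ m_σ d_{K,σ}/m_K`. -/
noncomputable def linRecAdj [Fintype E] [DecidableEq T] (M : Mesh T E) (u : E → ℝ) (K : T) : ℝ :=
  (∑ σ, ((if M.e1 σ = K then u σ * M.mS σ * M.d1 σ else 0) +
          (if M.e2 σ = K then u σ * M.mS σ * M.d2 σ else 0))) / M.m K

/-- `R_{𝒯'} = 𝕀^* ∘ L_Σ^*`. -/
noncomputable def coarseRec [Fintype T] [Fintype E] [DecidableEq T] [DecidableEq T']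
    (M : Mesh T E) (p : T → T') (u : E → ℝ) (K' : T') : ℝ :=
  injAdj M p (linRecAdj M u) K'

/-- Weighted scalar product on the coarse space. -/
noncomputable def iprodC [Fintype T] [Fintype T'] [DecidableEq T'] (M : Mesh T E) (p : T → T')
    (a b : T' → ℝ) : ℝ :=
  ∑ K', a K' * b K' * coarseM M p K'

/-- The discrete Benamou–Brenier functional `B_{N,𝒯}`; the time step is `τ = 1/(N+1)`,
`ρ k.succ` stands for `ρ^k` and `ρ k.castSucc` for `ρ^{k-1}`, `k = 1, …, N+1`. -/
noncomputable def Benergy [Fintype E] [Fintype T'] (M : Mesh T E) (p : T → T') (N : ℕ)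
    (ρ : Fin (N+2) → T' → ℝ) (F : Fin (N+1) → E → ℝ) : ℝ≥0∞ :=
  if ∀ k K', 0 ≤ ρ k K' then
    ∑ k : Fin (N+1),
      ENNReal.ofReal ((1:ℝ)/(N+1)) *
        ∑ σ, Bact (linRec M (inj p (fun K' => (ρ k.succ K' + ρ k.castSucc K') / 2)) σ) (F k σ) *
          ENNReal.ofReal (M.mS σ * M.dS σ)
  else ⊤

/-- The discrete continuity equation. -/
def ContEq [Fintype E] [DecidableEq T] (M : Mesh T E) (p : T → T') (N : ℕ)
    (ρ : Fin (N+2) → T' → ℝ) (F : Fin (N+1) → E → ℝ) : Prop :=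
  ∀ (k : Fin (N+1)) (K : T),
    (ρ k.succ (p K) - ρ k.castSucc (p K)) / ((1:ℝ)/(N+1)) + divT M (F k) K = 0

/-- The constraint set `𝒞_{N,𝒯}`. -/
def Cset [Fintype E] [DecidableEq T] (M : Mesh T E) (p : T → T') (N : ℕ)
    (ρin ρf : T' → ℝ) : Set ((Fin (N+2) → T' → ℝ) × (Fin (N+1) → E → ℝ)) :=
  {x | x.1 0 = ρin ∧ x.1 (Fin.last (N+1)) = ρf ∧ ContEq M p N x.1 x.2}

/-- The (halved, squared) discrete Wasserstein distance: `W² = 2 inf B`. -/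
noncomputable def Wdist2 [Fintype E] [Fintype T'] [DecidableEq T] (M : Mesh T E) (p : T → T')
    (N : ℕ) (ρin ρf : T' → ℝ) : ℝ≥0∞ :=
  2 * ⨅ (x : (Fin (N+2) → T' → ℝ) × (Fin (N+1) → E → ℝ)) (_ : x ∈ Cset M p N ρin ρf),
    Benergy M p N x.1 x.2

/-- Logarithmic barrier. -/
noncomputable def Jlog (x : ℝ) : EReal := if 0 < x then ((- Real.log x : ℝ) : EReal) else ⊤

/-- The barrier functional `J_{N,𝒯}` (only the interior times `k = 1, …, N`). -/
noncomputable def Jbar [Fintype T] [Fintype T'] [DecidableEq T'] (M : Mesh T E) (p : T → T')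
    (N : ℕ) (ρ : Fin (N+2) → T' → ℝ) : EReal :=
  ∑ k : Fin N, (((1:ℝ)/(N+1) : ℝ) : EReal) *
    ∑ K', Jlog (ρ (k.succ.castSucc) K') * ((coarseM M p K' : ℝ) : EReal)

/-- Perturbed objective `B_{N,𝒯} + μ J_{N,𝒯}`, with values in `EReal`. -/
noncomputable def Pobj [Fintype T] [Fintype T'] [Fintype E] [DecidableEq T'] (M : Mesh T E)
    (p : T → T') (N : ℕ) (μ : ℝ) (ρ : Fin (N+2) → T' → ℝ) (F : Fin (N+1) → E → ℝ) : EReal :=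
  (Benergy M p N ρ F : EReal) + (μ : EReal) * Jbar M p N ρ

/-- Connectivity of the graph of cells induced by the internal edges. -/
def MeshConnected (M : Mesh T E) : Prop :=
  ∀ K L : T, Relation.ReflTransGen
    (fun a b => ∃ σ, (M.e1 σ = a ∧ M.e2 σ = b) ∨ (M.e1 σ = b ∧ M.e2 σ = a)) K L

end OTFV

open OTFV

namespace OTFV

section EMisc

lemma esum_ne_bot {ι : Type*} (s : Finset ι) (f : ι → EReal) (h : ∀ i ∈ s, f i ≠ ⊥) :
    ∑ i ∈ s, f i ≠ ⊥ := by
  classical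
  induction s using Finset.cons_induction with
  | empty => simp
  | cons a s ha ih =>
    rw [Finset.sum_cons]
    intro hc
    rcases EReal.add_eq_bot_iff.mp hc with h1 | h1
    · exact h a (Finset.mem_cons_self a s) h1
    · exact ih (fun i hi => h i (Finset.mem_cons_of_mem hi)) h1

lemma esum_eq_top {ι : Type*} (s : Finset ι) (f : ι → EReal) (h : ∀ i ∈ s, f i ≠ ⊥)
    {i₀ : ι} (hi₀ : i₀ ∈ s) (htop : f i₀ = ⊤) : ∑ i ∈ s, f i = ⊤ := by
  classical
  rw [← Finset.add_sum_erase _ _ hi₀, htop]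
  exact EReal.top_add_of_ne_bot (esum_ne_bot _ _ fun i hi => h i (Finset.mem_of_mem_erase hi))

lemma ereal_coe_sum {ι : Type*} (s : Finset ι) (f : ι → ℝ) :
    ((∑ i ∈ s, f i : ℝ) : EReal) = ∑ i ∈ s, ((f i : ℝ) : EReal) :=
  map_sum (⟨⟨(fun x : ℝ => (x : EReal)), EReal.coe_zero⟩, EReal.coe_add⟩ : ℝ →+ EReal) f s

lemma coe_pos_mul_ne_bot {r : ℝ} (hr : 0 < r) {x : EReal} (hx : x ≠ ⊥) : (r : EReal) * x ≠ ⊥ := by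
  induction x using EReal.rec with
  | bot => exact absurd rfl hx
  | coe y => rw [← EReal.coe_mul]; exact EReal.coe_ne_bot _
  | top => rw [EReal.coe_mul_top_of_pos hr]; exact top_ne_bot

end EMisc

lemma if_step {T : Type*} [DecidableEq T] (A b c K : T) (h : b ≠ c) :
    ((if K = b then (1:ℝ) else 0) - if K = A then 1 else 0) +
      ((if b = K then (-1:ℝ) else 0) + (if c = K then 1 else 0)) =
    (if K = c then 1 else 0) - (if K = A then 1 else 0) := by
  by_cases h1 : K = b <;> by_cases h2 : K = c
  · exact absurd (h1.symm.trans h2) h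
  · have h2' : ¬ c = K := fun hh => h2 hh.symm
    subst h1
    simp [h2, h2']
    ring
  · have h1' : ¬ b = K := fun hh => h1 hh.symm
    subst h2
    simp [h1, h1']
    ring
  · have h1' : ¬ b = K := fun hh => h1 hh.symm
    have h2' : ¬ c = K := fun hh => h2 hh.symm
    simp [h1, h2, h1', h2']

section Snum
variable {T E : Type*} [Fintype E] [DecidableEq T]

noncomputable def Snum (M : Mesh T E) (F : E → ℝ) (K : T) : ℝ :=
  ∑ σ, ((if M.e1 σ = K then F σ else 0) + (if M.e2 σ = K then -F σ else 0)) * M.mS σ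

lemma divT_eq (M : Mesh T E) (F : E → ℝ) (K : T) : divT M F K = Snum M F K / M.m K := rfl

lemma Snum_add (M : Mesh T E) (F G : E → ℝ) (K : T) :
    Snum M (fun σ => F σ + G σ) K = Snum M F K + Snum M G K := by
  unfold Snum
  rw [← Finset.sum_add_distrib]
  refine Finset.sum_congr rfl fun σ _ => ?_
  split_ifs <;> ring

lemma Snum_mul (M : Mesh T E) (c : ℝ) (F : E → ℝ) (K : T) :
    Snum M (fun σ => c * F σ) K = c * Snum M F K := by
  unfold Snum
  rw [Finset.mul_sum]
  refine Finset.sum_congr rfl fun σ _ => ?_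
  split_ifs <;> ring

lemma Snum_sum {ι : Type*} (M : Mesh T E) (s : Finset ι) (f : ι → E → ℝ) (K : T) :
    Snum M (fun σ => ∑ i ∈ s, f i σ) K = ∑ i ∈ s, Snum M (f i) K := by
  classical
  induction s using Finset.cons_induction with
  | empty => simp [Snum]
  | cons a s ha ih =>
    rw [Finset.sum_cons, ← ih, ← Snum_add]
    simp_rw [Finset.sum_cons]

lemma Snum_single (M : Mesh T E) [DecidableEq E] (σ₀ : E) (s : ℝ) (K : T) :
    Snum M (fun σ => if σ = σ₀ then s / M.mS σ₀ else 0) K =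
      (if M.e1 σ₀ = K then s else 0) + (if M.e2 σ₀ = K then -s else 0) := by
  unfold Snum
  rw [Finset.sum_eq_single σ₀]
  · have h := (M.mS_pos σ₀).ne'
    simp only [if_pos rfl]
    split_ifs <;> field_simp <;> ring
  · intro b _ hb
    simp [hb]
  · simp

lemma exists_path_flux (M : Mesh T E) [DecidableEq E] {A B : T}
    (h : Relation.ReflTransGen
      (fun a b => ∃ σ, (M.e1 σ = a ∧ M.e2 σ = b) ∨ (M.e1 σ = b ∧ M.e2 σ = a)) A B) :
    ∃ F : E → ℝ, ∀ K, Snum M F K = (if K = B then 1 else 0) - (if K = A then 1 else 0) := by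
  induction h with
  | refl => exact ⟨0, fun K => by simp [Snum]⟩
  | @tail b c hab hbc ih =>
    obtain ⟨F, hF⟩ := ih
    obtain ⟨σ, hσ⟩ := hbc
    rcases hσ with ⟨h1, h2⟩ | ⟨h1, h2⟩
    · refine ⟨fun σ' => F σ' + (if σ' = σ then (-1) / M.mS σ else 0), fun K => ?_⟩
      rw [Snum_add, hF, Snum_single, h1, h2]
      have hbc' : b ≠ c := h1 ▸ h2 ▸ M.ne σ
      have := if_step A b c K hbc'
      simpa using this
    · refine ⟨fun σ' => F σ' + (if σ' = σ then (1:ℝ) / M.mS σ else 0), fun K => ?_⟩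
      rw [Snum_add, hF, Snum_single, h1, h2]
      have hbc' : b ≠ c := fun hh => (M.ne σ) (h1.trans (hh ▸ h2.symm))
      have := if_step A b c K hbc'
      rw [← this]
      ring_nf
end Snum

section Flux
variable {T E : Type*} [Fintype E] [Fintype T] [DecidableEq T]

lemma exists_flux (M : Mesh T E) (hconn : MeshConnected M)
    [Nonempty T] (g : T → ℝ) (hg : ∑ K, g K = 0) :
    ∃ F : E → ℝ, ∀ K, Snum M F K = g K := by
  classical
  obtain ⟨K₀⟩ := (inferInstance : Nonempty T)
  choose Φ hΦ using fun B => exists_path_flux M (hconn K₀ B)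
  refine ⟨fun σ => ∑ B, g B * Φ B σ, fun K => ?_⟩
  rw [Snum_sum M Finset.univ (fun B σ => g B * Φ B σ) K]
  have hmul : ∀ B, Snum M (fun σ => g B * Φ B σ) K = g B * Snum M (Φ B) K :=
    fun B => Snum_mul M (g B) (Φ B) K
  simp_rw [hmul, hΦ]
  have expand : ∀ x, g x * ((if K = x then 1 else 0) - if K = K₀ then 1 else 0)
      = (if K = x then g x else 0) - (if K = K₀ then (1:ℝ) else 0) * g x := by
    intro x; split_ifs <;> ring
  simp_rw [expand]
  rw [Finset.sum_sub_distrib, Finset.sum_ite_eq, ← Finset.mul_sum, hg]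
  simp

lemma sum_fiber {T' : Type*} [Fintype T'] [DecidableEq T'] (M : Mesh T E) (p : T → T')
    (h : T' → ℝ) : ∑ K, h (p K) * M.m K = ∑ K', h K' * coarseM M p K' := by
  classical
  rw [← Finset.sum_fiberwise Finset.univ p (fun K => h (p K) * M.m K)]
  refine Finset.sum_congr rfl fun K' _ => ?_
  unfold coarseM
  rw [Finset.mul_sum]
  refine Finset.sum_congr rfl fun K hK => ?_
  rw [(Finset.mem_filter.mp hK).2]
end Flux

section BactLemmas

lemma Bact_ne_top {p q : ℝ} (h : Bact p q ≠ ⊤) : 0 ≤ p ∧ (p = 0 → q = 0) := by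
  unfold Bact at h
  split_ifs at h with h1 h2
  · exact ⟨h1.le, fun hp => absurd (hp ▸ h1) (lt_irrefl 0)⟩
  · exact ⟨h2.1.ge, fun _ => h2.2⟩
  · exact absurd rfl h

lemma Bact_eq {p q : ℝ} (h0 : 0 ≤ p) (h : p = 0 → q = 0) :
    Bact p q = ENNReal.ofReal (q ^ 2 / (2 * p)) := by
  unfold Bact
  rcases h0.eq_or_lt with h1 | h1
  · rw [if_neg (by rw [← h1]; exact lt_irrefl 0), if_pos ⟨h1.symm, h h1.symm⟩, ← h1]
    simp
  · rw [if_pos h1]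

lemma q2p_convex {t p1 q1 p2 q2 : ℝ} (hp1 : 0 ≤ p1) (hz1 : p1 = 0 → q1 = 0)
    (hp2 : 0 ≤ p2) (hz2 : p2 = 0 → q2 = 0) (ht0 : 0 ≤ t) (ht1 : t ≤ 1) :
    ((1-t)*q1 + t*q2)^2 / (2*((1-t)*p1 + t*p2)) ≤
      (1-t)*(q1^2/(2*p1)) + t*(q2^2/(2*p2)) := by
  have h1t : 0 ≤ 1 - t := by linarith
  rcases hp1.eq_or_lt with e1 | e1
  · have hq1 : q1 = 0 := hz1 e1.symm
    subst hq1
    rw [← e1]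
    rcases hp2.eq_or_lt with e2 | e2
    · have hq2 : q2 = 0 := hz2 e2.symm
      subst hq2
      rw [← e2]
      simp
    · rcases ht0.eq_or_lt with e3 | e3
      · rw [← e3]; simp
      · have : (t*q2)^2/(2*(t*p2)) = t * (q2^2/(2*p2)) := by
          field_simp
        rw [show ((1-t)*0 + t*q2) = t*q2 by ring, show (2*((1-t)*0 + t*p2)) = 2*(t*p2) by ring,
          this]
        simp
  · rcases hp2.eq_or_lt with e2 | e2
    · have hq2 : q2 = 0 := hz2 e2.symm
      subst hq2
      rw [← e2]
      rcases h1t.eq_or_lt with e3 | e3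
      · rw [show t = 1 by linarith]; simp
      · have : ((1-t)*q1)^2/(2*((1-t)*p1)) = (1-t) * (q1^2/(2*p1)) := by
          field_simp
        rw [show ((1-t)*q1 + t*0) = (1-t)*q1 by ring, show (2*((1-t)*p1 + t*0)) = 2*((1-t)*p1) by
          ring, this]
        simp
    · rcases ht0.eq_or_lt with e3 | e3
      · rw [← e3]; simp
      rcases h1t.eq_or_lt with e4 | e4
      · rw [show t = 1 by linarith]; simp
      have hP : 0 < (1-t)*p1 := mul_pos (by linarith) e1
      have hR : 0 < t*p2 := mul_pos e3 e2
      have hden : 0 < 2*((1-t)*p1 + t*p2) := by linarith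
      rw [div_le_iff₀ hden]
      have expand : (1-t)*(q1^2/(2*p1)) + t*(q2^2/(2*p2))
          = ((1-t)*q1^2*p2 + t*q2^2*p1) / (2*p1*p2) := by
        field_simp
      rw [expand, div_mul_eq_mul_div, le_div_iff₀ (by positivity)]
      nlinarith [sq_nonneg ((1-t)*q1*(t*p2) - t*q2*((1-t)*p1)), sq_nonneg (q1*p2 - q2*p1),
        mul_pos hP hR, mul_pos e1 e2, sq_nonneg (q1*t*p2 - q2*t*p1)]

lemma Bact_convex {t p1 q1 p2 q2 : ℝ} (ht0 : 0 ≤ t) (ht1 : t ≤ 1)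
    (h1 : Bact p1 q1 ≠ ⊤) (h2 : Bact p2 q2 ≠ ⊤) :
    Bact ((1-t)*p1 + t*p2) ((1-t)*q1 + t*q2) ≤
      ENNReal.ofReal (1-t) * Bact p1 q1 + ENNReal.ofReal t * Bact p2 q2 := by
  obtain ⟨hp1, hz1⟩ := Bact_ne_top h1
  obtain ⟨hp2, hz2⟩ := Bact_ne_top h2
  have h1t : (0:ℝ) ≤ 1 - t := by linarith
  have hpt : 0 ≤ (1-t)*p1 + t*p2 := by positivity
  have hzt : (1-t)*p1 + t*p2 = 0 → (1-t)*q1 + t*q2 = 0 := by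
    intro hz
    have hA : (1-t)*p1 = 0 ∧ t*p2 = 0 := by
      constructor <;> nlinarith [mul_nonneg h1t hp1, mul_nonneg ht0 hp2]
    have hq1 : (1-t)*q1 = 0 := by
      rcases mul_eq_zero.mp hA.1 with h | h
      · rw [h, zero_mul]
      · rw [hz1 h, mul_zero]
    have hq2 : t*q2 = 0 := by
      rcases mul_eq_zero.mp hA.2 with h | h
      · rw [h, zero_mul]
      · rw [hz2 h, mul_zero]
    rw [hq1, hq2, add_zero]
  rw [Bact_eq hpt hzt, Bact_eq hp1 hz1, Bact_eq hp2 hz2,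
    ← ENNReal.ofReal_mul h1t, ← ENNReal.ofReal_mul ht0,
    ← ENNReal.ofReal_add (mul_nonneg h1t (div_nonneg (sq_nonneg _) (by linarith)))
      (mul_nonneg ht0 (div_nonneg (sq_nonneg _) (by linarith)))]
  exact ENNReal.ofReal_le_ofReal (q2p_convex hp1 hz1 hp2 hz2 ht0 ht1)

end BactLemmas

section BenergyLemmas
variable {T T' E : Type*} [Fintype T] [Fintype T'] [Fintype E] [DecidableEq T] [DecidableEq T']

/-- Edge density appearing in `Benergy`. -/
noncomputable def edens (M : Mesh T E) (p : T → T') {N : ℕ} (ρ : Fin (N+2) → T' → ℝ)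
    (k : Fin (N+1)) (σ : E) : ℝ :=
  linRec M (inj p (fun K' => (ρ k.succ K' + ρ k.castSucc K') / 2)) σ

lemma edens_affine (M : Mesh T E) (p : T → T') {N : ℕ} (ρx ρy : Fin (N+2) → T' → ℝ)
    (t : ℝ) (k : Fin (N+1)) (σ : E) :
    edens M p (fun j K' => (1-t) * ρx j K' + t * ρy j K') k σ
      = (1-t) * edens M p ρx k σ + t * edens M p ρy k σ := by
  unfold edens linRec inj
  ring

lemma edens_pos (M : Mesh T E) (p : T → T') {N : ℕ} {ρ : Fin (N+2) → T' → ℝ}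
    (k : Fin (N+1)) (σ : E)
    (h : ∀ K', 0 < (ρ k.succ K' + ρ k.castSucc K') / 2) : 0 < edens M p ρ k σ := by
  unfold edens linRec inj
  have w1 : 0 < M.d1 σ / M.dS σ := div_pos (M.d1_pos σ) (M.dS_pos σ)
  have w2 : 0 < M.d2 σ / M.dS σ := div_pos (M.d2_pos σ) (M.dS_pos σ)
  have := h (p (M.e1 σ))
  have := h (p (M.e2 σ))
  positivity

lemma Benergy_rw (M : Mesh T E) (p : T → T') (N : ℕ) (ρ : Fin (N+2) → T' → ℝ)
    (F : Fin (N+1) → E → ℝ) (hρ : ∀ k K', 0 ≤ ρ k K') :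
    Benergy M p N ρ F = ∑ k : Fin (N+1), ENNReal.ofReal ((1:ℝ)/(N+1)) *
      ∑ σ, Bact (edens M p ρ k σ) (F k σ) * ENNReal.ofReal (M.mS σ * M.dS σ) := by
  unfold Benergy
  rw [if_pos hρ]
  rfl

lemma Benergy_ne_top_elim {M : Mesh T E} {p : T → T'} {N : ℕ} {ρ : Fin (N+2) → T' → ℝ}
    {F : Fin (N+1) → E → ℝ} (h : Benergy M p N ρ F ≠ ⊤) :
    (∀ k K', 0 ≤ ρ k K') ∧ ∀ (k : Fin (N+1)) (σ : E), Bact (edens M p ρ k σ) (F k σ) ≠ ⊤ := by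
  have hg : ∀ k K', 0 ≤ ρ k K' := by
    by_contra hc
    rw [Benergy, if_neg hc] at h
    exact h rfl
  refine ⟨hg, fun k σ => ?_⟩
  rw [Benergy_rw M p N ρ F hg] at h
  have hk : ENNReal.ofReal ((1:ℝ)/(N+1)) *
      (∑ σ, Bact (edens M p ρ k σ) (F k σ) * ENNReal.ofReal (M.mS σ * M.dS σ)) ≠ ⊤ :=
    ne_top_of_le_ne_top h (Finset.single_le_sum
      (f := fun k : Fin (N+1) => ENNReal.ofReal ((1:ℝ)/(N+1)) *
        ∑ σ, Bact (edens M p ρ k σ) (F k σ) * ENNReal.ofReal (M.mS σ * M.dS σ))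
      (fun j _ => zero_le) (Finset.mem_univ k))
  have hτ : ENNReal.ofReal ((1:ℝ)/(N+1)) ≠ 0 := by
    rw [← ENNReal.ofReal_zero]
    intro hc
    have := ENNReal.ofReal_eq_ofReal_iff (by positivity) le_rfl |>.mp hc
    have hN : (0:ℝ) < 1/(N+1) := by positivity
    linarith
  have hsum : (∑ σ, Bact (edens M p ρ k σ) (F k σ) * ENNReal.ofReal (M.mS σ * M.dS σ)) ≠ ⊤ := by
    intro hc
    exact hk (ENNReal.mul_eq_top.mpr (Or.inl ⟨hτ, hc⟩))
  have hσ : Bact (edens M p ρ k σ) (F k σ) * ENNReal.ofReal (M.mS σ * M.dS σ) ≠ ⊤ :=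
    ne_top_of_le_ne_top hsum (Finset.single_le_sum
      (f := fun σ : E => Bact (edens M p ρ k σ) (F k σ) * ENNReal.ofReal (M.mS σ * M.dS σ))
      (fun j _ => zero_le) (Finset.mem_univ σ))
  intro hc
  have hw : ENNReal.ofReal (M.mS σ * M.dS σ) ≠ 0 := by
    simp only [ne_eq, ENNReal.ofReal_eq_zero, not_le]
    exact mul_pos (M.mS_pos σ) (M.dS_pos σ)
  exact hσ (ENNReal.mul_eq_top.mpr (Or.inr ⟨hc, hw⟩))

lemma Benergy_convex {M : Mesh T E} {p : T → T'} {N : ℕ} {ρx ρy : Fin (N+2) → T' → ℝ}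
    {Fx Fy : Fin (N+1) → E → ℝ} {t : ℝ} (ht0 : 0 ≤ t) (ht1 : t ≤ 1)
    (hx : Benergy M p N ρx Fx ≠ ⊤) (hy : Benergy M p N ρy Fy ≠ ⊤) :
    Benergy M p N (fun j K' => (1-t) * ρx j K' + t * ρy j K')
        (fun k σ => (1-t) * Fx k σ + t * Fy k σ)
      ≤ ENNReal.ofReal (1-t) * Benergy M p N ρx Fx + ENNReal.ofReal t * Benergy M p N ρy Fy := by
  obtain ⟨hgx, hbx⟩ := Benergy_ne_top_elim hx
  obtain ⟨hgy, hby⟩ := Benergy_ne_top_elim hy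
  have hgt : ∀ k K', 0 ≤ (1-t) * ρx k K' + t * ρy k K' := by
    intro k K'
    have := hgx k K'
    have := hgy k K'
    have h1t : (0:ℝ) ≤ 1 - t := by linarith
    positivity
  rw [Benergy_rw M p N ρx Fx hgx, Benergy_rw M p N ρy Fy hgy, Benergy_rw M p N _ _ hgt,
    Finset.mul_sum, Finset.mul_sum, ← Finset.sum_add_distrib]
  refine Finset.sum_le_sum fun k _ => ?_
  have hσ : ∀ σ : E, Bact (edens M p (fun j K' => (1-t) * ρx j K' + t * ρy j K') k σ)
        ((1-t) * Fx k σ + t * Fy k σ) * ENNReal.ofReal (M.mS σ * M.dS σ)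
      ≤ ENNReal.ofReal (1-t) * (Bact (edens M p ρx k σ) (Fx k σ) *
          ENNReal.ofReal (M.mS σ * M.dS σ))
        + ENNReal.ofReal t * (Bact (edens M p ρy k σ) (Fy k σ) *
          ENNReal.ofReal (M.mS σ * M.dS σ)) := by
    intro σ
    rw [edens_affine]
    refine le_trans (mul_le_mul_left (Bact_convex ht0 ht1 (hbx k σ) (hby k σ)) _)
      (le_of_eq ?_)
    ring
  refine le_trans (mul_le_mul_right (Finset.sum_le_sum fun σ _ => hσ σ) _) (le_of_eq ?_)
  rw [Finset.sum_add_distrib, ← Finset.mul_sum, ← Finset.mul_sum]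
  ring

end BenergyLemmas

section JbarLemmas
variable {T T' E : Type*} [Fintype T] [Fintype T'] [DecidableEq T']

lemma Jbar_coe (M : Mesh T E) (p : T → T') (N : ℕ) (ρ : Fin (N+2) → T' → ℝ)
    (h : ∀ (k : Fin N) (K' : T'), 0 < ρ k.succ.castSucc K') :
    Jbar M p N ρ = ((∑ k : Fin N, (1/(N+1:ℝ)) *
      ∑ K', (-Real.log (ρ k.succ.castSucc K')) * coarseM M p K' : ℝ) : EReal) := by
  unfold Jbar
  have hterm : ∀ (k : Fin N) (K' : T'),
      Jlog (ρ k.succ.castSucc K') * ((coarseM M p K' : ℝ) : EReal)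
        = (((-Real.log (ρ k.succ.castSucc K')) * coarseM M p K' : ℝ) : EReal) := by
    intro k K'
    rw [Jlog, if_pos (h k K'), ← EReal.coe_mul]
  simp_rw [hterm, ← ereal_coe_sum, ← EReal.coe_mul, ← ereal_coe_sum]

lemma Jlog_ne_bot (x : ℝ) : Jlog x ≠ ⊥ := by
  unfold Jlog
  split_ifs
  · exact EReal.coe_ne_bot _
  · exact top_ne_bot

lemma Jbar_term_ne_bot (M : Mesh T E) (p : T → T') (hp : ∀ K', 0 < coarseM M p K')
    {N : ℕ} (ρ : Fin (N+2) → T' → ℝ) (k : Fin N) (K' : T') :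
    Jlog (ρ k.succ.castSucc K') * ((coarseM M p K' : ℝ) : EReal) ≠ ⊥ := by
  set x := ρ k.succ.castSucc K'
  unfold Jlog
  split_ifs
  · rw [← EReal.coe_mul]; exact EReal.coe_ne_bot _
  · rw [EReal.top_mul_coe_of_pos (hp K')]; exact top_ne_bot

lemma Jbar_ne_bot (M : Mesh T E) (p : T → T') (hp : ∀ K', 0 < coarseM M p K')
    (N : ℕ) (ρ : Fin (N+2) → T' → ℝ) : Jbar M p N ρ ≠ ⊥ := by
  unfold Jbar
  refine esum_ne_bot _ _ fun k _ => ?_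
  refine coe_pos_mul_ne_bot (by positivity) ?_
  exact esum_ne_bot _ _ fun K' _ => Jbar_term_ne_bot M p hp ρ k K'

lemma Jbar_eq_top (M : Mesh T E) (p : T → T') (hp : ∀ K', 0 < coarseM M p K')
    {N : ℕ} (ρ : Fin (N+2) → T' → ℝ) {k₀ : Fin N} {K₀ : T'}
    (h0 : ρ k₀.succ.castSucc K₀ ≤ 0) : Jbar M p N ρ = ⊤ := by
  unfold Jbar
  refine esum_eq_top _ _ (fun k _ => coe_pos_mul_ne_bot (by positivity)
    (esum_ne_bot _ _ fun K' _ => Jbar_term_ne_bot M p hp ρ k K')) (Finset.mem_univ k₀) ?_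
  rw [show ((1/(N+1:ℝ) : ℝ) : EReal) * ∑ K', Jlog (ρ k₀.succ.castSucc K') *
      ((coarseM M p K' : ℝ) : EReal) = ⊤ from ?_]
  rw [esum_eq_top _ _ (fun K' _ => Jbar_term_ne_bot M p hp ρ k₀ K') (Finset.mem_univ K₀) ?_]
  · exact EReal.coe_mul_top_of_pos (by positivity)
  · rw [Jlog, if_neg (not_lt.mpr h0), EReal.top_mul_coe_of_pos (hp K₀)]

end JbarLemmas
section Competitor
variable {T T' E : Type*} [Fintype T] [Fintype T'] [Fintype E] [DecidableEq T] [DecidableEq T']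

lemma exists_good_competitor (M : Mesh T E) (hconn : MeshConnected M) (p : T → T') (N : ℕ)
    (hN : 0 < N) (hp : ∀ K', 0 < coarseM M p K') (ρin ρf : T' → ℝ)
    (hin : ∀ K', 0 ≤ ρin K') (hf : ∀ K', 0 ≤ ρf K')
    (hmass : ∑ K', ρin K' * coarseM M p K' = ∑ K', ρf K' * coarseM M p K')
    (hmasspos : 0 < ∑ K', ρin K' * coarseM M p K') :
    ∃ y : (Fin (N+2) → T' → ℝ) × (Fin (N+1) → E → ℝ), y ∈ Cset M p N ρin ρf ∧
      Benergy M p N y.1 y.2 ≠ ⊤ ∧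
      (∀ (k : Fin N) (K' : T'), y.1 k.succ.castSucc K' =
        (∑ K', ρin K' * coarseM M p K') / (∑ K', coarseM M p K')) := by
  classical
  have hT' : Nonempty T' := by
    by_contra hc
    rw [not_nonempty_iff] at hc
    rw [Finset.univ_eq_empty, Finset.sum_empty] at hmasspos
    exact lt_irrefl 0 hmasspos
  have hT : Nonempty T := by
    obtain ⟨K'⟩ := hT'
    have h1 := hp K'
    by_contra hc
    rw [not_nonempty_iff] at hc
    unfold coarseM at h1
    rw [Finset.univ_eq_empty, Finset.filter_empty, Finset.sum_empty] at h1
    exact lt_irrefl 0 h1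
  set mass := ∑ K', ρin K' * coarseM M p K' with hmassdef
  set Mtot := ∑ K', coarseM M p K' with hMtotdef
  have hMtotpos : 0 < Mtot := Finset.sum_pos (fun K' _ => hp K') Finset.univ_nonempty
  set ρbar : ℝ := mass / Mtot with hρbardef
  have hρbarpos : 0 < ρbar := div_pos hmasspos hMtotpos
  set ρy : Fin (N+2) → T' → ℝ :=
    fun j K' => if (j:ℕ) = 0 then ρin K' else if (j:ℕ) = N+1 then ρf K' else ρbar with hρydef
  have hρynn : ∀ j K', 0 ≤ ρy j K' := by
    intro j K'
    rw [hρydef]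
    dsimp only
    split_ifs
    · exact hin K'
    · exact hf K'
    · exact hρbarpos.le
  have hρymass : ∀ j : Fin (N+2), ∑ K', ρy j K' * coarseM M p K' = mass := by
    intro j
    rw [hρydef]
    dsimp only
    split_ifs with h0 h1
    · exact hmassdef.symm
    · exact hmass.symm
    · rw [← Finset.mul_sum, ← hMtotdef, hρbardef, div_mul_cancel₀ _ hMtotpos.ne']
  have hflux : ∀ k : Fin (N+1), ∃ F : E → ℝ, ∀ K : T,
      Snum M F K = -((ρy k.succ (p K) - ρy k.castSucc (p K)) * (N+1) * M.m K) := by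
    intro k
    apply exists_flux M hconn
    have hsplit : ∀ K : T, -((ρy k.succ (p K) - ρy k.castSucc (p K)) * (N+1) * M.m K)
        = (-(N+1) : ℝ) * ((fun K' => ρy k.succ K' - ρy k.castSucc K') (p K) * M.m K) := by
      intro K; ring
    calc ∑ K, -((ρy k.succ (p K) - ρy k.castSucc (p K)) * (N+1) * M.m K)
        = ∑ K, (-(N+1) : ℝ) * ((fun K' => ρy k.succ K' - ρy k.castSucc K') (p K) * M.m K) :=
          Finset.sum_congr rfl fun K _ => hsplit K
      _ = (-(N+1) : ℝ) * ∑ K, (fun K' => ρy k.succ K' - ρy k.castSucc K') (p K) * M.m K := by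
          rw [Finset.mul_sum]
      _ = (-(N+1) : ℝ) * ∑ K', (ρy k.succ K' - ρy k.castSucc K') * coarseM M p K' := by
          rw [sum_fiber M p (fun K' => ρy k.succ K' - ρy k.castSucc K')]
      _ = 0 := by
          have : ∑ K', (ρy k.succ K' - ρy k.castSucc K') * coarseM M p K'
              = (∑ K', ρy k.succ K' * coarseM M p K')
                - ∑ K', ρy k.castSucc K' * coarseM M p K' := by
            rw [← Finset.sum_sub_distrib]
            exact Finset.sum_congr rfl fun K' _ => by ring
          rw [this, hρymass, hρymass, sub_self, mul_zero]
  choose Fy hFy using hflux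
  have hCE : ContEq M p N ρy Fy := by
    intro k K
    rw [divT_eq, hFy k K]
    have hm := (M.m_pos K).ne'
    have hN1 : ((N:ℝ) + 1) ≠ 0 := by positivity
    field_simp
    ring
  -- interior values
  have hint : ∀ (k : Fin N) (K' : T'), ρy k.succ.castSucc K' = ρbar := by
    intro k K'
    rw [hρydef]
    dsimp only
    have hv : ((k.succ.castSucc : Fin (N+2)) : ℕ) = (k:ℕ) + 1 := by
      simp [Fin.coe_castSucc, Fin.val_succ]
    rw [hv]
    have hk := k.isLt
    rw [if_neg (by omega), if_neg (by omega)]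
  -- edge densities are positive
  have hepos : ∀ (k : Fin (N+1)) (K' : T'), 0 < (ρy k.succ K' + ρy k.castSucc K') / 2 := by
    intro k K'
    have h1 := hρynn k.succ K'
    have h2 := hρynn k.castSucc K'
    by_cases h0 : (k:ℕ) = 0
    · have : ρy k.succ K' = ρbar := by
        rw [hρydef]
        dsimp only
        have hv : ((k.succ : Fin (N+2)) : ℕ) = (k:ℕ) + 1 := by simp [Fin.val_succ]
        rw [hv, h0]
        rw [if_neg (by omega), if_neg (by omega)]
      rw [this] at h1 ⊢
      linarith
    · have : ρy k.castSucc K' = ρbar := by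
        rw [hρydef]
        dsimp only
        have hv : ((k.castSucc : Fin (N+2)) : ℕ) = (k:ℕ) := by simp
        rw [hv]
        have hk := k.isLt
        rw [if_neg h0, if_neg (by omega)]
      rw [this] at h2 ⊢
      linarith
  refine ⟨(ρy, Fy), ⟨?_, ?_, hCE⟩, ?_, fun k K' => hint k K'⟩
  · funext K'
    rw [hρydef]
    dsimp only
    rw [if_pos (by simp)]
  · funext K'
    rw [hρydef]
    dsimp only
    rw [if_neg (by simp), if_pos (by simp)]
  · -- finite energy
    rw [Benergy_rw M p N ρy Fy hρynn]
    refine (ENNReal.sum_lt_top.mpr ?_).ne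
    intro k _
    refine ENNReal.mul_lt_top ENNReal.ofReal_lt_top (ENNReal.sum_lt_top.mpr ?_)
    intro σ _
    have hB : Bact (edens M p ρy k σ) (Fy k σ) ≠ ⊤ := by
      have hpos : 0 < edens M p ρy k σ := edens_pos M p k σ (fun K' => hepos k K')
      unfold Bact
      rw [if_pos hpos]
      exact ENNReal.ofReal_ne_top
    exact ENNReal.mul_lt_top hB.lt_top ENNReal.ofReal_lt_top
end Competitor

end OTFV

set_option maxHeartbeats 2000000 in
theorem barrier_positivity
    {T T' E : Type*} [Fintype T] [Fintype T'] [Fintype E] [DecidableEq T] [DecidableEq T']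
    (M : Mesh T E) (hconn : MeshConnected M) (p : T → T') (N : ℕ)
    (hp : ∀ K', 0 < coarseM M p K')
    (ρin ρf : T' → ℝ) (hin : ∀ K', 0 ≤ ρin K') (hf : ∀ K', 0 ≤ ρf K')
    (hmass : ∑ K', ρin K' * coarseM M p K' = ∑ K', ρf K' * coarseM M p K')
    (hmasspos : 0 < ∑ K', ρin K' * coarseM M p K')
    (xh : (Fin (N+2) → T' → ℝ) × (Fin (N+1) → E → ℝ))
    (hxh : xh ∈ Cset M p N ρin ρf) (hfin : Benergy M p N xh.1 xh.2 ≠ ⊤) :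
    ∃ C > 0, ∀ μ : ℝ, 0 < μ → μ ≤ 1 →
      ∀ x ∈ Cset M p N ρin ρf,
        (∀ y ∈ Cset M p N ρin ρf, Pobj M p N μ x.1 x.2 ≤ Pobj M p N μ y.1 y.2) →
        ∀ (k : Fin N) (K' : T'), C * μ ≤ x.1 k.succ.castSucc K' := by
  classical
  rcases Nat.eq_zero_or_pos N with hN0 | hN
  · subst hN0
    exact ⟨1, one_pos, fun μ _ _ x _ _ k K' => k.elim0⟩
  obtain ⟨y, hyC, hBy, hyint⟩ :=
    exists_good_competitor M hconn p N hN hp ρin ρf hin hf hmass hmasspos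
  have hT' : Nonempty T' := by
    by_contra hc
    rw [not_nonempty_iff] at hc
    rw [Finset.univ_eq_empty, Finset.sum_empty] at hmasspos
    exact lt_irrefl 0 hmasspos
  set mass := ∑ K', ρin K' * coarseM M p K' with hmassdef
  set Mtot := ∑ K', coarseM M p K' with hMtotdef
  have hMtotpos : 0 < Mtot := Finset.sum_pos (fun K' _ => hp K') Finset.univ_nonempty
  set ρbar : ℝ := mass / Mtot with hρbardef
  have hρbarpos : 0 < ρbar := div_pos hmasspos hMtotpos
  set τ : ℝ := 1/(N+1 : ℝ) with hτdef
  have hτ : 0 < τ := by positivity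
  obtain ⟨Km, _, hKm⟩ := Finset.exists_min_image Finset.univ
    (fun K' => coarseM M p K') Finset.univ_nonempty
  set mmin := coarseM M p Km with hmmindef
  have hmminpos : 0 < mmin := hp Km
  have hmmin : ∀ K', mmin ≤ coarseM M p K' := fun K' => hKm K' (Finset.mem_univ K')
  set bY : ℝ := (Benergy M p N y.1 y.2).toReal with hbYdef
  have hbY0 : 0 ≤ bY := ENNReal.toReal_nonneg
  have hByeq : Benergy M p N y.1 y.2 = ENNReal.ofReal bY := (ENNReal.ofReal_toReal hBy).symm
  set D : ℝ := (bY/(2*τ) + Real.log 2 * (N * Mtot))/mmin with hDdef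
  have hlog2 : (0:ℝ) ≤ Real.log 2 := Real.log_nonneg (by norm_num)
  have hD0 : 0 ≤ D := by
    apply div_nonneg _ hmminpos.le
    have h1 : 0 ≤ bY/(2*τ) := by positivity
    have h2 : 0 ≤ Real.log 2 * (N * Mtot) := by positivity
    linarith
  refine ⟨(ρbar/2) * Real.exp (-D), by positivity, ?_⟩
  intro μ hμ0 hμ1 x hxC hmin k₀ K₀
  obtain ⟨hx0, hxl, hxCE⟩ := hxC
  obtain ⟨hy0, hyl, hyCE⟩ := hyC
  -- the value of the objective at y
  have hJycoe := Jbar_coe M p N y.1 (fun k K' => by rw [hyint k K']; exact hρbarpos)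
  set jY : ℝ := ∑ k : Fin N, (1/(N+1:ℝ)) *
      ∑ K', (-Real.log (y.1 k.succ.castSucc K')) * coarseM M p K' with hjYdef
  have hPy : Pobj M p N μ y.1 y.2 = ((bY + μ * jY : ℝ) : EReal) := by
    unfold Pobj
    rw [hByeq, hJycoe, EReal.coe_ennreal_ofReal, max_eq_left hbY0,
      ← EReal.coe_mul, ← EReal.coe_add]
  have hPley := hmin y ⟨hy0, hyl, hyCE⟩
  rw [hPy] at hPley
  -- finiteness of the energy of the minimizer
  have hBx : Benergy M p N x.1 x.2 ≠ ⊤ := by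
    intro hc
    rw [Pobj, hc, EReal.coe_ennreal_top,
      EReal.top_add_of_ne_bot (coe_pos_mul_ne_bot hμ0 (Jbar_ne_bot M p hp N x.1))] at hPley
    exact (EReal.coe_ne_top _) (top_le_iff.mp hPley)
  obtain ⟨hρxnn, hbactx⟩ := Benergy_ne_top_elim hBx
  set bX : ℝ := (Benergy M p N x.1 x.2).toReal with hbXdef
  have hbX0 : 0 ≤ bX := ENNReal.toReal_nonneg
  have hBxeq : Benergy M p N x.1 x.2 = ENNReal.ofReal bX := (ENNReal.ofReal_toReal hBx).symm
  -- interior positivity of the minimizer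
  have hpos : ∀ (k : Fin N) (K' : T'), 0 < x.1 k.succ.castSucc K' := by
    intro k K'
    rcases (hρxnn k.succ.castSucc K').eq_or_lt with h | h
    · exfalso
      have hJtop : Jbar M p N x.1 = ⊤ := Jbar_eq_top M p hp x.1 (k₀ := k) (K₀ := K') h.ge
      rw [Pobj, hJtop, EReal.coe_mul_top_of_pos hμ0,
        EReal.add_top_of_ne_bot (EReal.coe_ennreal_ne_bot _)] at hPley
      exact (EReal.coe_ne_top _) (top_le_iff.mp hPley)
    · exact h
  have hJxcoe := Jbar_coe M p N x.1 hpos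
  set jX : ℝ := ∑ k : Fin N, (1/(N+1:ℝ)) *
      ∑ K', (-Real.log (x.1 k.succ.castSucc K')) * coarseM M p K' with hjXdef
  have hPx : Pobj M p N μ x.1 x.2 = ((bX + μ * jX : ℝ) : EReal) := by
    unfold Pobj
    rw [hBxeq, hJxcoe, EReal.coe_ennreal_ofReal, max_eq_left hbX0,
      ← EReal.coe_mul, ← EReal.coe_add]
  -- the perturbation parameter
  set t : ℝ := μ/2 with htdef
  have ht0 : 0 < t := by positivity
  have ht12 : t ≤ 1/2 := by rw [htdef]; linarith
  have ht1 : t ≤ 1 := by linarith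
  have h1t2 : (1:ℝ)/2 ≤ 1 - t := by linarith
  have h1t0 : 0 < 1 - t := by linarith
  -- the convex combination
  set ρt : Fin (N+2) → T' → ℝ := fun j K' => (1-t) * x.1 j K' + t * y.1 j K' with hρtdef
  set Ft : Fin (N+1) → E → ℝ := fun k σ => (1-t) * x.2 k σ + t * y.2 k σ with hFtdef
  have hρtval : ∀ j K', ρt j K' = (1-t) * x.1 j K' + t * y.1 j K' := fun j K' => by
    rw [hρtdef]
  have hmixC : (ρt, Ft) ∈ Cset M p N ρin ρf := by
    refine ⟨?_, ?_, ?_⟩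
    · funext K'
      have h1 := congrFun hx0 K'
      have h2 := congrFun hy0 K'
      show ρt 0 K' = ρin K'
      rw [hρtval, h1, h2]; ring
    · funext K'
      have h1 := congrFun hxl K'
      have h2 := congrFun hyl K'
      show ρt _ K' = ρf K'
      rw [hρtval, h1, h2]; ring
    · intro k K
      have h1 := hxCE k K
      have h2 := hyCE k K
      rw [divT_eq] at h1 h2 ⊢
      have hSnum : Snum M (Ft k) K = (1-t) * Snum M (x.2 k) K + t * Snum M (y.2 k) K := by
        have e1 : Ft k = fun σ => ((fun σ => (1-t) * x.2 k σ) σ + (fun σ => t * y.2 k σ) σ) := by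
          rw [hFtdef]
        rw [e1, Snum_add, Snum_mul, Snum_mul]
      show (ρt k.succ (p K) - ρt k.castSucc (p K)) / ((1:ℝ)/(N+1)) + Snum M (Ft k) K / M.m K = 0
      rw [hSnum, hρtval, hρtval]
      linear_combination (1-t) * h1 + t * h2
  have hPlemix := hmin (ρt, Ft) hmixC
  -- energy bound on the mixture
  have hBmix : Benergy M p N ρt Ft ≤ ENNReal.ofReal ((1-t)*bX + t*bY) := by
    have hconv := Benergy_convex (M := M) (p := p) ht0.le ht1 hBx hBy
    rw [hBxeq, hByeq, ← ENNReal.ofReal_mul (by linarith : (0:ℝ) ≤ 1 - t),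
      ← ENNReal.ofReal_mul ht0.le,
      ← ENNReal.ofReal_add (by positivity) (by positivity)] at hconv
    have heq1 : ρt = fun j K' => (1-t) * x.1 j K' + t * y.1 j K' := hρtdef
    have heq2 : Ft = fun k σ => (1-t) * x.2 k σ + t * y.2 k σ := hFtdef
    rw [heq1, heq2]
    exact hconv
  -- positivity of mixture interior densities
  have hmixpos : ∀ (k : Fin N) (K' : T'), 0 < ρt k.succ.castSucc K' := by
    intro k K'
    have h1 := hρxnn k.succ.castSucc K'
    have h2 : y.1 k.succ.castSucc K' = ρbar := hyint k K'
    rw [hρtval, h2]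
    nlinarith
  have hJmixcoe := Jbar_coe M p N ρt hmixpos
  set jT : ℝ := ∑ k : Fin N, (1/(N+1:ℝ)) *
      ∑ K', (-Real.log (ρt k.succ.castSucc K')) * coarseM M p K' with hjTdef
  have hPmix : Pobj M p N μ ρt Ft ≤ (((1-t)*bX + t*bY + μ * jT : ℝ) : EReal) := by
    unfold Pobj
    rw [hJmixcoe, ← EReal.coe_mul]
    have hcoe : ((((1-t)*bX + t*bY + μ * jT : ℝ)) : EReal)
        = (((1-t)*bX + t*bY : ℝ) : EReal) + ((μ * jT : ℝ) : EReal) := by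
      rw [← EReal.coe_add]
    rw [hcoe]
    refine add_le_add ?_ le_rfl
    refine le_trans (EReal.coe_ennreal_le_coe_ennreal_iff.mpr hBmix) (le_of_eq ?_)
    rw [EReal.coe_ennreal_ofReal, max_eq_left (by positivity)]
  -- the master real inequality
  have hreal : bX + μ * jX ≤ (1-t)*bX + t*bY + μ * jT := by
    have hch := le_trans (hPx ▸ hPlemix) hPmix
    exact_mod_cast hch
  -- lower bound for the double sum
  set S : ℝ := ∑ k : Fin N, ∑ K',
      (Real.log (ρt k.succ.castSucc K') - Real.log (x.1 k.succ.castSucc K'))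
        * coarseM M p K' with hSdef
  have hdiff : jX - jT = τ * S := by
    rw [hSdef, hjXdef, hjTdef, ← Finset.sum_sub_distrib, hτdef, Finset.mul_sum]
    refine Finset.sum_congr rfl fun k _ => ?_
    rw [← mul_sub, ← Finset.sum_sub_distrib]
    congr 1
    refine Finset.sum_congr rfl fun K' _ => ?_
    ring
  -- termwise lower bounds
  have hterm1 : ∀ (k : Fin N) (K' : T'),
      -(Real.log 2) * coarseM M p K' ≤
        (Real.log (ρt k.succ.castSucc K') - Real.log (x.1 k.succ.castSucc K'))
          * coarseM M p K' := by
    intro k K'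
    refine mul_le_mul_of_nonneg_right ?_ (hp K').le
    have ha := hpos k K'
    have hyb : y.1 k.succ.castSucc K' = ρbar := hyint k K'
    have hlow : (1-t) * x.1 k.succ.castSucc K' ≤ ρt k.succ.castSucc K' := by
      rw [hρtval, hyb]
      nlinarith
    have hl1 : Real.log ((1-t) * x.1 k.succ.castSucc K') ≤ Real.log (ρt k.succ.castSucc K') :=
      Real.log_le_log (by positivity) hlow
    rw [Real.log_mul h1t0.ne' ha.ne'] at hl1
    have hl2 : Real.log (1/2 : ℝ) ≤ Real.log (1-t) := Real.log_le_log (by norm_num) h1t2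
    rw [show (1/2 : ℝ) = 2⁻¹ by norm_num, Real.log_inv] at hl2
    linarith
  have hterm0 : (Real.log (t*ρbar) - Real.log (x.1 k₀.succ.castSucc K₀)) * coarseM M p K₀ ≤
      (Real.log (ρt k₀.succ.castSucc K₀) - Real.log (x.1 k₀.succ.castSucc K₀))
        * coarseM M p K₀ := by
    refine mul_le_mul_of_nonneg_right ?_ (hp K₀).le
    have ha := hpos k₀ K₀
    have hyb : y.1 k₀.succ.castSucc K₀ = ρbar := hyint k₀ K₀
    have hlow : t * ρbar ≤ ρt k₀.succ.castSucc K₀ := by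
      rw [hρtval, hyb]
      nlinarith
    have := Real.log_le_log (by positivity) hlow
    linarith
  have hsumM : ∑ k : Fin N, ∑ K' : T', Real.log 2 * coarseM M p K'
      = Real.log 2 * (N * Mtot) := by
    rw [Finset.sum_const]
    simp only [Finset.card_univ, Fintype.card_fin, smul_eq_mul]
    rw [← Finset.mul_sum, ← hMtotdef]
    ring
  have hSlow : (Real.log (t*ρbar) - Real.log (x.1 k₀.succ.castSucc K₀)) * coarseM M p K₀
      - Real.log 2 * (N * Mtot) ≤ S := by
    have hnn : ∀ (k : Fin N) (K' : T'),
        0 ≤ (Real.log (ρt k.succ.castSucc K') - Real.log (x.1 k.succ.castSucc K'))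
          * coarseM M p K' + Real.log 2 * coarseM M p K' := by
      intro k K'
      have := hterm1 k K'
      linarith
    have hkey : (Real.log (ρt k₀.succ.castSucc K₀) - Real.log (x.1 k₀.succ.castSucc K₀))
          * coarseM M p K₀ + Real.log 2 * coarseM M p K₀
        ≤ ∑ k : Fin N, ∑ K',
          ((Real.log (ρt k.succ.castSucc K') - Real.log (x.1 k.succ.castSucc K'))
            * coarseM M p K' + Real.log 2 * coarseM M p K') := by
      refine le_trans ?_ (Finset.single_le_sum
        (f := fun k : Fin N => ∑ K',
          ((Real.log (ρt k.succ.castSucc K') - Real.log (x.1 k.succ.castSucc K'))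
            * coarseM M p K' + Real.log 2 * coarseM M p K'))
        (fun k _ => Finset.sum_nonneg fun K' _ => hnn k K') (Finset.mem_univ k₀))
      exact Finset.single_le_sum (fun K' _ => hnn k₀ K') (Finset.mem_univ K₀)
    have hsplit : ∑ k : Fin N, ∑ K',
          ((Real.log (ρt k.succ.castSucc K') - Real.log (x.1 k.succ.castSucc K'))
            * coarseM M p K' + Real.log 2 * coarseM M p K')
        = S + Real.log 2 * (N * Mtot) := by
      rw [hSdef, ← hsumM, ← Finset.sum_add_distrib]
      refine Finset.sum_congr rfl fun k _ => ?_
      rw [← Finset.sum_add_distrib]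
    rw [hsplit] at hkey
    have hm0 : 0 ≤ Real.log 2 * coarseM M p K₀ := mul_nonneg hlog2 (hp K₀).le
    linarith [hterm0]
  -- from the master inequality to a bound on S
  have hμS : μ * (τ * S) ≤ μ * (bY / 2) := by
    have h1 : μ * (jX - jT) ≤ t * bY := by nlinarith
    rw [hdiff] at h1
    rw [htdef] at h1
    linarith
  have hτS : τ * S ≤ bY / 2 := (mul_le_mul_iff_right₀ hμ0).mp hμS
  have hS2 : S ≤ bY / (2*τ) := by
    rw [show bY / (2*τ) = (bY/2)/τ by rw [div_div]]
    rw [le_div_iff₀ hτ]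
    linarith [mul_comm τ S]
  -- conclude
  set a₀ : ℝ := x.1 k₀.succ.castSucc K₀ with ha₀def
  have ha₀ : 0 < a₀ := hpos k₀ K₀
  have hA : (Real.log (t*ρbar) - Real.log a₀) * coarseM M p K₀
      ≤ bY/(2*τ) + Real.log 2 * (N * Mtot) := by linarith
  have hBnum0 : 0 ≤ bY/(2*τ) + Real.log 2 * (N * Mtot) := by positivity
  have hA2 : Real.log (t*ρbar) - Real.log a₀ ≤ D := by
    have hstep1 : Real.log (t*ρbar) - Real.log a₀
        ≤ (bY/(2*τ) + Real.log 2 * (N * Mtot)) / coarseM M p K₀ := by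
      rw [le_div_iff₀ (hp K₀)]
      exact hA
    have hstep2 : (bY/(2*τ) + Real.log 2 * (N * Mtot)) / coarseM M p K₀
        ≤ (bY/(2*τ) + Real.log 2 * (N * Mtot)) / mmin :=
      div_le_div_of_nonneg_left hBnum0 hmminpos (hmmin K₀)
    rw [hDdef]
    linarith
  calc ρbar/2 * Real.exp (-D) * μ = (t * ρbar) * Real.exp (-D) := by rw [htdef]; ring
    _ = Real.exp (Real.log (t*ρbar)) * Real.exp (-D) := by
        rw [Real.exp_log (by positivity)]
    _ = Real.exp (Real.log (t*ρbar) - D) := by rw [sub_eq_add_neg, Real.exp_add]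
    _ ≤ Real.exp (Real.log a₀) := Real.exp_le_exp.mpr (by linarith)
    _ = a₀ := Real.exp_log ha₀
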